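/- The map L : P ↦ M_T U_k U_kᵀ + V_{n−k} P U_{n−k}ᵀ is a bijection from 𝕆_{n−k} onto 𝕄(X,Y), and its inverse is the map M ↦ V_{n−k}ᵀ M U_{n−k}; that is, for every P ∈ 𝕆_{n−k}, V_{n−k}ᵀ L(P) U_{n−k} = P, and for every M ∈ 𝕄(X,Y), L(V_{n−k}ᵀ M U_{n−k}) = M. -/

import Mathlib

open Matrix

/-- Euclidean norm of a vector in ℝ^m. -/
noncomputable def euclNorm {m : ℕ} (x : Fin m → ℝ) : ℝ := Real.sqrt (∑ i, x i ^ 2)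

/-- Column space of a matrix: the span of its columns. -/
def colSpace {n q : ℕ} (X : Matrix (Fin n) (Fin q) ℝ) : Submodule ℝ (Fin n → ℝ) :=
  Submodule.span ℝ (Set.range Xᵀ)

/-- Orthogonal complement (as a set) of a subspace of ℝ^n, w.r.t. the dot product. -/
def perpSet {n : ℕ} (W : Submodule ℝ (Fin n → ℝ)) : Set (Fin n → ℝ) :=
  {z | ∀ w ∈ W, z ⬝ᵥ w = 0}

lemma col_mem {n q : ℕ} (A : Matrix (Fin n) (Fin q) ℝ) (j : Fin q) : Aᵀ j ∈ colSpace A :=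
  Submodule.subset_span ⟨j, rfl⟩

lemma mulVec_col {n q : ℕ} (M : Matrix (Fin n) (Fin n) ℝ) (A : Matrix (Fin n) (Fin q) ℝ)
    (j : Fin q) : M *ᵥ Aᵀ j = (M * A)ᵀ j := by
  ext i; simp [mulVec, mul_apply, dotProduct]

lemma agree_on_colSpace {n q : ℕ} {M N : Matrix (Fin n) (Fin n) ℝ}
    {A : Matrix (Fin n) (Fin q) ℝ} (h : M * A = N * A) {v : Fin n → ℝ}
    (hv : v ∈ colSpace A) : M *ᵥ v = N *ᵥ v := by
  induction hv using Submodule.span_induction with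
  | mem x hx => obtain ⟨j, rfl⟩ := hx; rw [mulVec_col, mulVec_col, h]
  | zero => simp
  | add x y _ _ hx hy => simp [Matrix.mulVec_add, hx, hy]
  | smul c x _ hx => simp [Matrix.mulVec_smul, hx]

lemma mul_eq_mul_of_colSpace {n q r : ℕ} {M N : Matrix (Fin n) (Fin n) ℝ}
    {A : Matrix (Fin n) (Fin q) ℝ} {B : Matrix (Fin n) (Fin r) ℝ}
    (h : M * A = N * A) (hB : ∀ j, Bᵀ j ∈ colSpace A) : M * B = N * B := by
  ext i j
  have := congrFun (agree_on_colSpace h (hB j)) i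
  simpa [mulVec, mul_apply, dotProduct] using this

lemma mulVec_mem_colSpace {n q : ℕ} (M : Matrix (Fin n) (Fin n) ℝ)
    {A : Matrix (Fin n) (Fin q) ℝ} {v : Fin n → ℝ} (hv : v ∈ colSpace A) :
    M *ᵥ v ∈ colSpace (M * A) := by
  induction hv using Submodule.span_induction with
  | mem x hx => obtain ⟨j, rfl⟩ := hx; rw [mulVec_col]; exact col_mem _ j
  | zero => simp
  | add x y _ _ hx hy => rw [Matrix.mulVec_add]; exact Submodule.add_mem _ hx hy
  | smul c x _ hx => rw [Matrix.mulVec_smul]; exact Submodule.smul_mem _ _ hx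

lemma transpose_mul_apply {n a b : ℕ} (A : Matrix (Fin n) (Fin a) ℝ)
    (B : Matrix (Fin n) (Fin b) ℝ) (i : Fin a) (j : Fin b) :
    (Aᵀ * B) i j = Aᵀ i ⬝ᵥ Bᵀ j := by
  simp [mul_apply, dotProduct]

lemma perp_mul_eq_zero {n a b : ℕ} {A : Matrix (Fin n) (Fin a) ℝ}
    {B : Matrix (Fin n) (Fin b) ℝ} {W : Submodule ℝ (Fin n → ℝ)}
    (hA : (colSpace A : Set (Fin n → ℝ)) = perpSet W)
    (hB : ∀ j, Bᵀ j ∈ W) : Aᵀ * B = 0 := by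
  ext i j
  rw [transpose_mul_apply]
  have hmem : (Aᵀ i) ∈ (colSpace A : Set (Fin n → ℝ)) := col_mem A i
  rw [hA] at hmem
  exact hmem (Bᵀ j) (hB j)

lemma mem_perp_of_mul {n a b : ℕ} {A : Matrix (Fin n) (Fin a) ℝ}
    {B : Matrix (Fin n) (Fin b) ℝ} (h : Aᵀ * B = 0) (i : Fin a) :
    Aᵀ i ∈ perpSet (colSpace B) := by
  intro w hw
  induction hw using Submodule.span_induction with
  | mem x hx =>
      obtain ⟨j, rfl⟩ := hx
      have := congrFun (congrFun h i) j
      rwa [transpose_mul_apply] at this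
  | zero => simp
  | add x y _ _ hx hy => rw [dotProduct_add, hx, hy, add_zero]
  | smul c x _ hx => rw [dotProduct_smul, hx, smul_zero]


/-- L : P ↦ M_T U_k U_kᵀ + V_{n−k} P U_{n−k}ᵀ is a bijection from 𝕆_{n−k} onto
𝕄(X,Y) with inverse M ↦ V_{n−k}ᵀ M U_{n−k}: L maps 𝕆_{n−k} into 𝕄(X,Y), the inverse map
sends 𝕄(X,Y) into 𝕆_{n−k}, and the two maps are mutually inverse. -/
theorem L_bijection {n q k : ℕ}
    (X : Matrix (Fin n) (Fin q) ℝ) (MT : Matrix (Fin n) (Fin n) ℝ) (hMT : MTᵀ * MT = 1)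
    (hk : Module.finrank ℝ (colSpace X) = k)
    (Uk : Matrix (Fin n) (Fin k) ℝ) (hUk : Ukᵀ * Uk = 1)
    (hUkspan : colSpace Uk = colSpace X)
    (U2 : Matrix (Fin n) (Fin (n - k)) ℝ) (hU2 : U2ᵀ * U2 = 1)
    (hU2span : (colSpace U2 : Set (Fin n → ℝ)) = perpSet (colSpace X))
    (V2 : Matrix (Fin n) (Fin (n - k)) ℝ) (hV2 : V2ᵀ * V2 = 1)
    (hV2span : (colSpace V2 : Set (Fin n → ℝ)) = perpSet (colSpace (MT * X))) :
    (∀ P : Matrix (Fin (n - k)) (Fin (n - k)) ℝ, Pᵀ * P = 1 →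
      (MT * Uk * Ukᵀ + V2 * P * U2ᵀ)ᵀ * (MT * Uk * Ukᵀ + V2 * P * U2ᵀ) = 1 ∧
      (MT * Uk * Ukᵀ + V2 * P * U2ᵀ) * X = MT * X) ∧
    (∀ M : Matrix (Fin n) (Fin n) ℝ, Mᵀ * M = 1 → M * X = MT * X →
      (V2ᵀ * M * U2)ᵀ * (V2ᵀ * M * U2) = 1) ∧
    (∀ P : Matrix (Fin (n - k)) (Fin (n - k)) ℝ, Pᵀ * P = 1 →
      V2ᵀ * (MT * Uk * Ukᵀ + V2 * P * U2ᵀ) * U2 = P) ∧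
    (∀ M : Matrix (Fin n) (Fin n) ℝ, Mᵀ * M = 1 → M * X = MT * X →
      MT * Uk * Ukᵀ + V2 * (V2ᵀ * M * U2) * U2ᵀ = M) := by
  have hkn : k ≤ n := by
    have h1 := Submodule.finrank_le (colSpace X)
    rw [hk, Module.finrank_fin_fun] at h1
    exact h1
  have e : Fin n ≃ Fin k ⊕ Fin (n - k) :=
    (finSumFinEquiv.trans (finCongr (Nat.add_sub_cancel' hkn))).symm
  have hXcols : ∀ j, Xᵀ j ∈ colSpace Uk := fun j => hUkspan ▸ col_mem X j
  have hUkcols : ∀ j, Ukᵀ j ∈ colSpace X := fun j => hUkspan ▸ col_mem Uk j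
  have F3 : U2ᵀ * X = 0 := perp_mul_eq_zero hU2span (fun j => col_mem X j)
  have F2 : U2ᵀ * Uk = 0 := perp_mul_eq_zero hU2span hUkcols
  have F2' : Ukᵀ * U2 = 0 := by
    have := congrArg transpose F2; simpa using this
  have F6 : V2ᵀ * (MT * Uk) = 0 := perp_mul_eq_zero hV2span (fun j => by
    rw [← mulVec_col]; exact mulVec_mem_colSpace MT (hUkcols j))
  have F6' : (MT * Uk)ᵀ * V2 = 0 := by
    have := congrArg transpose F6; simpa using this
  have F4 : Uk * Ukᵀ * X = X := by
    have h : (Uk * Ukᵀ) * Uk = (1 : Matrix (Fin n) (Fin n) ℝ) * Uk := by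
      rw [Matrix.mul_assoc, hUk, Matrix.mul_one, Matrix.one_mul]
    have h2 := mul_eq_mul_of_colSpace h hXcols
    rwa [Matrix.one_mul] at h2
  have F5 : Uk * Ukᵀ + U2 * U2ᵀ = 1 := by
    have h1 : fromRows Ukᵀ U2ᵀ * fromCols Uk U2 = 1 := by
      rw [fromRows_mul_fromCols, hUk, hU2, F2, F2', ← fromBlocks_one]
    have h2 := (fromCols_mul_fromRows_eq_one_comm e Uk U2 Ukᵀ U2ᵀ).mpr h1
    rwa [fromCols_mul_fromRows] at h2
  have hA : (MT * Uk)ᵀ * (MT * Uk) = 1 := by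
    rw [transpose_mul, Matrix.mul_assoc, ← Matrix.mul_assoc MTᵀ MT Uk, hMT,
      Matrix.one_mul, hUk]
  refine ⟨fun P hP => ⟨?_, ?_⟩, fun M hM hMX => ?_, fun P hP => ?_, fun M hM hMX => ?_⟩
  · -- orthogonality of L(P)
    have T11 : (MT * Uk * Ukᵀ)ᵀ * (MT * Uk * Ukᵀ) = Uk * Ukᵀ := by
      rw [transpose_mul, transpose_transpose,
        Matrix.mul_assoc Uk ((MT * Uk)ᵀ) (MT * Uk * Ukᵀ),
        ← Matrix.mul_assoc ((MT * Uk)ᵀ) (MT * Uk) Ukᵀ, hA, Matrix.one_mul]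
    have T12 : (MT * Uk * Ukᵀ)ᵀ * (V2 * P * U2ᵀ) = 0 := by
      rw [transpose_mul, transpose_transpose, Matrix.mul_assoc V2 P U2ᵀ,
        Matrix.mul_assoc Uk ((MT * Uk)ᵀ) (V2 * (P * U2ᵀ)),
        ← Matrix.mul_assoc ((MT * Uk)ᵀ) V2 (P * U2ᵀ), F6',
        Matrix.zero_mul, Matrix.mul_zero]
    have T21 : (V2 * P * U2ᵀ)ᵀ * (MT * Uk * Ukᵀ) = 0 := by
      rw [transpose_mul, transpose_transpose, transpose_mul,
        Matrix.mul_assoc U2 (Pᵀ * V2ᵀ) (MT * Uk * Ukᵀ),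
        Matrix.mul_assoc Pᵀ V2ᵀ (MT * Uk * Ukᵀ),
        ← Matrix.mul_assoc V2ᵀ (MT * Uk) Ukᵀ, F6,
        Matrix.zero_mul, Matrix.mul_zero, Matrix.mul_zero]
    have T22 : (V2 * P * U2ᵀ)ᵀ * (V2 * P * U2ᵀ) = U2 * U2ᵀ := by
      rw [transpose_mul, transpose_transpose, transpose_mul, Matrix.mul_assoc V2 P U2ᵀ,
        Matrix.mul_assoc U2 (Pᵀ * V2ᵀ) (V2 * (P * U2ᵀ)),
        Matrix.mul_assoc Pᵀ V2ᵀ (V2 * (P * U2ᵀ)),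
        ← Matrix.mul_assoc V2ᵀ V2 (P * U2ᵀ), hV2, Matrix.one_mul,
        ← Matrix.mul_assoc Pᵀ P U2ᵀ, hP, Matrix.one_mul]
    rw [transpose_add, Matrix.add_mul, Matrix.mul_add, Matrix.mul_add,
      T11, T12, T21, T22, add_zero, zero_add, F5]
  · -- L(P) * X = MT * X
    have t2 : V2 * P * U2ᵀ * X = 0 := by
      rw [Matrix.mul_assoc, F3, Matrix.mul_zero]
    rw [Matrix.add_mul, t2, add_zero, Matrix.mul_assoc MT Uk Ukᵀ,
      Matrix.mul_assoc MT (Uk * Ukᵀ) X, F4]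
  · -- inverse map lands in orthogonal group
    have hMU2 : (M * U2)ᵀ * (MT * X) = 0 := by
      rw [transpose_mul, ← hMX, Matrix.mul_assoc U2ᵀ Mᵀ (M * X),
        ← Matrix.mul_assoc Mᵀ M X, hM, Matrix.one_mul, F3]
    have hMU2cols : ∀ j, (M * U2)ᵀ j ∈ colSpace V2 := fun j => by
      have h1 := mem_perp_of_mul hMU2 j
      rw [← hV2span] at h1
      exact h1
    have G : V2 * (V2ᵀ * (M * U2)) = M * U2 := by
      have h : (V2 * V2ᵀ) * V2 = (1 : Matrix (Fin n) (Fin n) ℝ) * V2 := by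
        rw [Matrix.mul_assoc, hV2, Matrix.mul_one, Matrix.one_mul]
      have h2 := mul_eq_mul_of_colSpace h hMU2cols
      rwa [Matrix.one_mul, Matrix.mul_assoc] at h2
    rw [transpose_mul, transpose_mul, transpose_transpose, Matrix.mul_assoc V2ᵀ M U2,
      Matrix.mul_assoc U2ᵀ (Mᵀ * V2) (V2ᵀ * (M * U2)),
      Matrix.mul_assoc Mᵀ V2 (V2ᵀ * (M * U2)), G,
      ← Matrix.mul_assoc Mᵀ M U2, hM, Matrix.one_mul, hU2]
  · -- V2ᵀ L(P) U2 = P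
    have t1 : V2ᵀ * (MT * Uk * Ukᵀ) * U2 = 0 := by
      rw [← Matrix.mul_assoc V2ᵀ (MT * Uk) Ukᵀ, F6, Matrix.zero_mul, Matrix.zero_mul]
    have t2 : V2ᵀ * (V2 * P * U2ᵀ) * U2 = P := by
      rw [← Matrix.mul_assoc V2ᵀ (V2 * P) U2ᵀ, ← Matrix.mul_assoc V2ᵀ V2 P, hV2,
        Matrix.one_mul, Matrix.mul_assoc P U2ᵀ U2, hU2, Matrix.mul_one]
    rw [Matrix.mul_add, Matrix.add_mul, t1, t2, zero_add]
  · -- L(V2ᵀ M U2) = M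
    have hMUk : M * Uk = MT * Uk := mul_eq_mul_of_colSpace hMX hUkcols
    have hMU2 : (M * U2)ᵀ * (MT * X) = 0 := by
      rw [transpose_mul, ← hMX, Matrix.mul_assoc U2ᵀ Mᵀ (M * X),
        ← Matrix.mul_assoc Mᵀ M X, hM, Matrix.one_mul, F3]
    have hMU2cols : ∀ j, (M * U2)ᵀ j ∈ colSpace V2 := fun j => by
      have h1 := mem_perp_of_mul hMU2 j
      rw [← hV2span] at h1
      exact h1
    have G : V2 * (V2ᵀ * (M * U2)) = M * U2 := by
      have h : (V2 * V2ᵀ) * V2 = (1 : Matrix (Fin n) (Fin n) ℝ) * V2 := by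
        rw [Matrix.mul_assoc, hV2, Matrix.mul_one, Matrix.one_mul]
      have h2 := mul_eq_mul_of_colSpace h hMU2cols
      rwa [Matrix.one_mul, Matrix.mul_assoc] at h2
    rw [← hMUk, Matrix.mul_assoc V2ᵀ M U2, G, Matrix.mul_assoc M Uk Ukᵀ,
      Matrix.mul_assoc M U2 U2ᵀ, ← Matrix.mul_add, F5, Matrix.mul_one]
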